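/- Let q be a prime power, r ≥ 1, and let M be a q^r-divisible multiset of points in PG(v-1,q), i.e., |M ∩ H| ≡ |M| (mod q^r) for every hyperplane H. Then for every subspace U of codimension 2 in PG(v-1,q), we have |M ∩ U| ≡ |M| (mod q^{r-1}). -/

import Mathlib

open Module
open scoped Classical

-- generator of a rank-1 submodule
lemma rank_one_gen {F : Type} [Field F] {V : Type} [AddCommGroup V] [Module F V]
    (P : Submodule F V) (h : finrank F P = 1) :
    ∃ x : V, x ≠ 0 ∧ P = Submodule.span F {x} := by
  obtain ⟨v, hv0, hv⟩ := finrank_eq_one_iff'.mp h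
  refine ⟨(v : V), ?_, ?_⟩
  · simpa using hv0
  · apply le_antisymm
    · intro p hp
      obtain ⟨c, hc⟩ := hv ⟨p, hp⟩
      have : c • (v : V) = p := congrArg Subtype.val hc
      rw [← this]
      exact Submodule.smul_mem _ _ (Submodule.mem_span_singleton_self _)
    · rw [Submodule.span_singleton_le_iff_mem]
      exact v.2

lemma key_sum {F : Type} [Field F] [Fintype F] {V : Type} [AddCommGroup V] [Module F V]
    {ι : Type} [Fintype ι]
    (H : ι → Submodule F V) (U : Submodule F V)
    (M : Multiset (Submodule F V))
    (hcard : ∀ P : Submodule F V, finrank F P = 1 →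
      (Finset.univ.filter (fun t : ι => P ≤ H t)).card
        = (if P ≤ U then Fintype.card ι - 1 else 0) + 1)
    (hpts : ∀ P ∈ M, finrank F P = 1) :
    ∑ t : ι, Multiset.countP (fun P => P ≤ H t) M
      = (Fintype.card ι - 1) * Multiset.countP (fun P => P ≤ U) M + Multiset.card M := by
  induction M using Multiset.induction with
  | empty => simp
  | cons a s ih =>
    have ha : finrank F a = 1 := hpts a (Multiset.mem_cons_self a s)
    have ih' := ih (fun P hP => hpts P (Multiset.mem_cons_of_mem hP))
    simp only [Multiset.countP_cons, Multiset.card_cons]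
    rw [Finset.sum_add_distrib, ih']
    have : ∑ t : ι, (if a ≤ H t then 1 else 0)
        = (if a ≤ U then Fintype.card ι - 1 else 0) + 1 := by
      rw [← Finset.card_filter]
      exact hcard a ha
    rw [this]
    by_cases h : a ≤ U <;> simp [h, Nat.mul_add, Nat.mul_one] <;> ring

lemma modeq_sum {ι : Type} {s : Finset ι} {n : ℕ} {f g : ι → ℕ}
    (h : ∀ i ∈ s, f i ≡ g i [MOD n]) : ∑ i ∈ s, f i ≡ ∑ i ∈ s, g i [MOD n] := by
  induction s using Finset.induction with
  | empty => rfl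
  | insert _ _ hx ih =>
    rw [Finset.sum_insert hx, Finset.sum_insert hx]
    exact (h _ (Finset.mem_insert_self _ _)).add
      (ih fun i hi => h i (Finset.mem_insert_of_mem hi))

theorem stmt0 (q v r : ℕ) (hq : ∃ p n : ℕ, p.Prime ∧ q = p ^ n) (hr : 1 ≤ r)
    (F : Type) [Field F] [Fintype F] (hF : Fintype.card F = q)
    (M : Multiset (Submodule F (Fin v → F)))
    (hpts : ∀ P ∈ M, finrank F P = 1)
    (hdiv : ∀ H : Submodule F (Fin v → F), finrank F H = v - 1 →
      Multiset.countP (fun P => P ≤ H) M ≡ Multiset.card M [MOD q ^ r]) :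
    ∀ U : Submodule F (Fin v → F), finrank F U = v - 2 →
      Multiset.countP (fun P => P ≤ U) M ≡ Multiset.card M [MOD q ^ (r - 1)] := by
  intro U hU
  have hq0 : 0 < q := by
    obtain ⟨p, n, hp, rfl⟩ := hq
    exact pow_pos hp.pos n
  have hV : finrank F (Fin v → F) = v := by simp
  by_cases hv : 2 ≤ v
  · -- main case
    have hquot : finrank F ((Fin v → F) ⧸ U) = 2 := by
      have h1 := Submodule.finrank_quotient_add_finrank U
      have h2 : finrank F U ≤ v := by
        rw [hU]; omega
      omega
    have e : ((Fin v → F) ⧸ U) ≃ₗ[F] (Fin 2 → F) :=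
      LinearEquiv.ofFinrankEq _ _ (by rw [hquot, Module.finrank_fin_fun])
    set ψ : Option F → ((Fin 2 → F) →ₗ[F] F) := fun t => match t with
      | none => LinearMap.proj 0
      | some a => LinearMap.proj 1 - a • LinearMap.proj 0 with hψ
    set f : Option F → ((Fin v → F) →ₗ[F] F) :=
      fun t => (ψ t).comp (e.toLinearMap.comp U.mkQ) with hf
    set H : Option F → Submodule F (Fin v → F) := fun t => LinearMap.ker (f t) with hH
    -- each ψ t attains value 1
    have hψ1 : ∀ t : Option F, ∃ w : Fin 2 → F, ψ t w = 1 := by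
      rintro (_ | a)
      · exact ⟨Pi.single 0 1, by simp [hψ]⟩
      · exact ⟨Pi.single 1 1, by simp [hψ]⟩
    -- each f t is surjective
    have hfsurj : ∀ t : Option F, Function.Surjective (f t) := by
      intro t c
      obtain ⟨w, hw⟩ := hψ1 t
      obtain ⟨y, hy⟩ := e.surjective w
      obtain ⟨x, hx⟩ := U.mkQ_surjective y
      refine ⟨c • x, ?_⟩
      simp [hf, hx, hy, hw]
    -- each H t is a hyperplane
    have hHrank : ∀ t : Option F, finrank F (H t) = v - 1 := by
      intro t
      have h1 := LinearMap.finrank_range_add_finrank_ker (f t)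
      rw [LinearMap.range_eq_top.mpr (hfsurj t), finrank_top, finrank_self, hV] at h1
      show finrank F (LinearMap.ker (f t)) = v - 1
      omega
    -- the point count
    have hcard : ∀ P : Submodule F (Fin v → F), finrank F P = 1 →
        (Finset.univ.filter (fun t : Option F => P ≤ H t)).card
          = (if P ≤ U then Fintype.card (Option F) - 1 else 0) + 1 := by
      intro P hP
      obtain ⟨x, hx0, rfl⟩ := rank_one_gen P hP
      set w : Fin 2 → F := e (U.mkQ x) with hw
      have hle : ∀ t, Submodule.span F {x} ≤ H t ↔ ψ t w = 0 := by
        intro t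
        rw [Submodule.span_singleton_le_iff_mem, hH]
        simp [hf, LinearMap.mem_ker, hw]
      have hleU : Submodule.span F {x} ≤ U ↔ w = 0 := by
        rw [Submodule.span_singleton_le_iff_mem, hw]
        constructor
        · intro hxU
          rw [show U.mkQ x = 0 from (Submodule.Quotient.mk_eq_zero U).mpr hxU]
          simp
        · intro h0
          have : U.mkQ x = 0 := by
            apply e.injective; simpa using h0
          exact (Submodule.Quotient.mk_eq_zero U).mp this
      by_cases hw0 : w = 0
      · have : (Finset.univ.filter (fun t : Option F => Submodule.span F {x} ≤ H t))
            = Finset.univ := by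
          apply Finset.filter_true_of_mem
          intro t _
          rw [hle t, hw0]
          simp
        rw [this, if_pos (hleU.mpr hw0), Finset.card_univ, Fintype.card_option]
        simp
      · rw [if_neg (fun h => hw0 (hleU.mp h))]
        have key : ∃ t₀ : Option F, ∀ t : Option F, ψ t w = 0 ↔ t = t₀ := by
          by_cases h0 : w 0 = 0
          · have h1 : w 1 ≠ 0 := by
              intro h1
              apply hw0
              funext i
              fin_cases i <;> simp [h0, h1]
            refine ⟨none, ?_⟩
            rintro (_ | a)
            · simp [hψ, h0]
            · simp only [hψ]
              simp [h0, h1]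
          · refine ⟨some (w 1 * (w 0)⁻¹), ?_⟩
            rintro (_ | a)
            · simp [hψ, h0]
            · simp only [hψ, LinearMap.sub_apply, LinearMap.smul_apply, LinearMap.proj_apply,
                smul_eq_mul, sub_eq_zero, Option.some.injEq]
              constructor
              · intro h; rw [h, mul_inv_cancel_right₀ h0]
              · intro h; rw [h, inv_mul_cancel_right₀ h0]
        obtain ⟨t₀, ht₀⟩ := key
        have : (Finset.univ.filter (fun t : Option F => Submodule.span F {x} ≤ H t)) = {t₀} := by
          ext t
          simp only [Finset.mem_filter, Finset.mem_univ, true_and, Finset.mem_singleton,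
            hle t, ht₀ t]
        rw [this]
        simp
    -- sum identity
    have hsum := key_sum H U M hcard hpts
    rw [Fintype.card_option, Nat.add_sub_cancel, hF] at hsum
    -- congruence of sums
    have hmod : ∑ t : Option F, Multiset.countP (fun P => P ≤ H t) M
        ≡ ∑ _t : Option F, Multiset.card M [MOD q ^ r] := by
      apply modeq_sum
      intro t _
      exact hdiv (H t) (hHrank t)
    rw [hsum, Finset.sum_const, Finset.card_univ, Fintype.card_option, hF, smul_eq_mul,
      add_mul, one_mul] at hmod
    have hcancel : q * Multiset.countP (fun P => P ≤ U) M
        ≡ q * Multiset.card M [MOD q ^ r] :=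
      Nat.ModEq.add_right_cancel' (Multiset.card M) hmod
    have hr' : q ^ r = q * q ^ (r - 1) := by
      rw [← pow_succ']
      congr 1
      omega
    rw [hr'] at hcancel
    exact Nat.ModEq.mul_left_cancel' (by omega) hcancel
  · -- degenerate case v ≤ 1
    have hU0 : U = ⊥ := by
      have : finrank F U = 0 := by rw [hU]; omega
      exact Submodule.finrank_eq_zero.mp this
    have hbot : finrank F (⊥ : Submodule F (Fin v → F)) = v - 1 := by
      rw [finrank_bot]; omega
    have := hdiv ⊥ hbot
    rw [hU0]
    exact this.of_dvd (pow_dvd_pow q (by omega))
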